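/- Let ν and η be Borel probability measures on a compact set J ⊂ ℂ, q > 0, C ≥ 1, and suppose that for ν-almost every z there are radii r_j(z) → 0 with both ν(B(z,r_j)) and η(B(z,r_j)) comparable to r_j^q up to the factor C. Then η(E) ≥ c·ν(E) for every open set E ⊂ ℂ, where c > 0 depends only on C and the Besicovitch covering constant. Consequently ν and η are not mutually singular unless ν = 0. -/

import Mathlib

set_option maxHeartbeats 1000000


open MeasureTheory Metric Filter
open scoped ENNReal Topology

/-- Second step of Lemma 5.2: if at `ν`-a.e. point both measures are comparable to `r^q`
along radii tending to `0`, then `η(E) ≥ c ν(E)` for every open `E`; consequently `ν` and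
`η` are not mutually singular. -/
theorem stmt_7 (J : Set ℂ) (hJ : IsCompact J)
    (ν η : Measure ℂ) [IsProbabilityMeasure ν] [IsProbabilityMeasure η]
    (hνJ : ν Jᶜ = 0) (hηJ : η Jᶜ = 0)
    (q C : ℝ) (hq : 0 < q) (hC : 1 ≤ C)
    (h : ∀ᵐ z ∂ν, z ∈ J → ∃ r : ℕ → ℝ, (∀ j, 0 < r j) ∧ Tendsto r atTop (𝓝 0) ∧
      ∀ j, (ENNReal.ofReal (C⁻¹ * r j ^ q) ≤ ν (ball z (r j)) ∧
              ν (ball z (r j)) ≤ ENNReal.ofReal (C * r j ^ q)) ∧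
           (ENNReal.ofReal (C⁻¹ * r j ^ q) ≤ η (ball z (r j)) ∧
              η (ball z (r j)) ≤ ENNReal.ofReal (C * r j ^ q))) :
    (∃ c : ℝ, 0 < c ∧ ∀ E : Set ℂ, IsOpen E → ENNReal.ofReal c * ν E ≤ η E) ∧
      ¬ ν.MutuallySingular η := by
  have hCpos : (0:ℝ) < C := lt_of_lt_of_le one_pos hC
  set c : ℝ := (2 * C * C)⁻¹ with hc_def
  have hcpos : 0 < c := by positivity
  -- the set of good points
  set A : Set ℂ := {z : ℂ | ∃ r : ℕ → ℝ, (∀ j, 0 < r j) ∧ Tendsto r atTop (𝓝 0) ∧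
      ∀ j, (ENNReal.ofReal (C⁻¹ * r j ^ q) ≤ ν (ball z (r j)) ∧
              ν (ball z (r j)) ≤ ENNReal.ofReal (C * r j ^ q)) ∧
           (ENNReal.ofReal (C⁻¹ * r j ^ q) ≤ η (ball z (r j)) ∧
              η (ball z (r j)) ≤ ENNReal.ofReal (C * r j ^ q))} with hA_def
  have hJae : ∀ᵐ z ∂ν, z ∈ J := by
    rw [ae_iff]
    exact hνJ
  have h' : ∀ᵐ z ∂ν, z ∈ A := by
    filter_upwards [h, hJae] with z h1 h2 using h1 h2
  have hAnull : ν {z : ℂ | ¬ z ∈ A} = 0 := by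
    rw [ae_iff] at h'; exact h'
  -- the key inequality, for all sets
  have key : ∀ s : Set ℂ, ENNReal.ofReal c * ν s ≤ η s := by
    intro s
    have h1 : ν (s \ A) = 0 :=
      measure_mono_null (fun x hx => hx.2) hAnull
    have h2 : ν s ≤ ν (s ∩ A) := by
      calc ν s ≤ ν (s ∩ A) + ν (s \ A) := measure_le_inter_add_diff ν s A
        _ = ν (s ∩ A) := by rw [h1, add_zero]
    have h3 : (ENNReal.ofReal c • ν) (s ∩ A) ≤ η (s ∩ A) := by
      apply (Besicovitch.vitaliFamily ν).measure_le_of_frequently_le η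
        (Measure.AbsolutelyContinuous.rfl.smul_left _)
      rintro x ⟨-, hxA⟩
      obtain ⟨r, hr0, hrt, hrb⟩ := hxA
      -- for each j, choose a radius u j < r j where η of the closed ball is large
      have exu : ∀ j : ℕ, ∃ u : ℝ, 0 < u ∧ u < r j ∧
          ENNReal.ofReal (C⁻¹ * r j ^ q / 2) ≤ η (closedBall x u) := by
        intro j
        have hrj : 0 < r j := hr0 j
        set B : ℕ → Set ℂ := fun n => closedBall x (r j - r j / (n + 2)) with hB_def
        have hBmono : Monotone B := by
          intro n m hnm
          apply closedBall_subset_closedBall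
          have hle : ((n:ℝ) + 2) ≤ ((m:ℝ) + 2) := by exact_mod_cast by omega
          have : r j / (m + 2) ≤ r j / (n + 2) := by gcongr
          linarith
        have hBunion : ⋃ n, B n = ball x (r j) := by
          ext y
          simp only [hB_def, Set.mem_iUnion, mem_closedBall, mem_ball]
          constructor
          · rintro ⟨n, hn⟩
            have : 0 < r j / (n + 2) := by positivity
            linarith
          · intro hy
            have htend : Tendsto (fun n : ℕ => r j / ((n:ℝ) + 2)) atTop (𝓝 0) := by
              have h0 := (tendsto_const_div_atTop_nhds_zero_nat (r j)).comp
                (tendsto_add_atTop_nat 2)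
              have heq : (fun n : ℕ => r j / ((n:ℝ) + 2)) = (fun n : ℕ => r j / (n:ℝ)) ∘ (fun a => a + 2) := by
                funext n; simp [Function.comp]
              rw [heq]; exact h0
            have : ∀ᶠ n : ℕ in atTop, r j / (n + 2) < r j - dist y x :=
              htend.eventually (gt_mem_nhds (by linarith))
            obtain ⟨n, hn⟩ := this.exists
            exact ⟨n, by push_cast at hn ⊢; linarith⟩
        have hlim : Tendsto (fun n => η (B n)) atTop (𝓝 (η (⋃ n, B n))) :=
          tendsto_measure_iUnion_atTop hBmono
        rw [hBunion] at hlim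
        have hlt : ENNReal.ofReal (C⁻¹ * r j ^ q / 2) < η (ball x (r j)) := by
          refine lt_of_lt_of_le ?_ ((hrb j).2.1)
          apply ENNReal.ofReal_lt_ofReal_iff_of_nonneg (by positivity) |>.2
          have : 0 < C⁻¹ * r j ^ q := by positivity
          linarith
        have : ∀ᶠ n : ℕ in atTop, ENNReal.ofReal (C⁻¹ * r j ^ q / 2) < η (B n) :=
          hlim.eventually (eventually_gt_nhds hlt)
        obtain ⟨n, hn⟩ := this.exists
        refine ⟨r j - r j / (n + 2), ?_, ?_, hn.le⟩
        · have h1 : r j / (n + 2) < r j := by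
            rw [div_lt_iff₀ (by positivity)]
            nlinarith [hrj]
          linarith
        · have : 0 < r j / (n + 2) := by positivity
          linarith
      choose u hu0 hur huη using exu
      -- u tends to 0 within (0, ∞)
      have hut : Tendsto u atTop (𝓝[>] (0:ℝ)) := by
        apply tendsto_nhdsWithin_of_tendsto_nhds_of_eventually_within
        · exact squeeze_zero (fun j => (hu0 j).le) (fun j => (hur j).le) hrt
        · exact Eventually.of_forall fun j => hu0 j
      refine ((Besicovitch.tendsto_filterAt ν x).comp hut).frequently ?_
      apply Frequently.of_forall
      intro j
      show (ENNReal.ofReal c • ν) (closedBall x (u j)) ≤ η (closedBall x (u j))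
      have hν1 : ν (closedBall x (u j)) ≤ ENNReal.ofReal (C * r j ^ q) :=
        le_trans (measure_mono (fun y hy =>
          lt_of_le_of_lt (mem_closedBall.1 hy) (hur j))) ((hrb j).1.2)
      calc (ENNReal.ofReal c • ν) (closedBall x (u j))
          = ENNReal.ofReal c * ν (closedBall x (u j)) := rfl
        _ ≤ ENNReal.ofReal c * ENNReal.ofReal (C * r j ^ q) := by gcongr
        _ = ENNReal.ofReal (c * (C * r j ^ q)) := by
            rw [← ENNReal.ofReal_mul hcpos.le]
        _ = ENNReal.ofReal (C⁻¹ * r j ^ q / 2) := by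
            congr 1
            rw [hc_def]
            field_simp
        _ ≤ η (closedBall x (u j)) := huη j
    calc ENNReal.ofReal c * ν s ≤ ENNReal.ofReal c * ν (s ∩ A) := by gcongr
      _ = (ENNReal.ofReal c • ν) (s ∩ A) := rfl
      _ ≤ η (s ∩ A) := h3
      _ ≤ η s := measure_mono Set.inter_subset_left
  constructor
  · exact ⟨c, hcpos, fun E _ => key E⟩
  · rintro ⟨t, htm, ht0, htc⟩
    have h1 : ν tᶜ = 0 := by
      have := key tᶜ
      rw [htc, nonpos_iff_eq_zero, mul_eq_zero] at this
      rcases this with h | h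
      · exact absurd h (by simp [ENNReal.ofReal_pos.2 hcpos, (ENNReal.ofReal_pos.2 hcpos).ne'])
      · exact h
    have : (ν : Measure ℂ) Set.univ ≤ ν t + ν tᶜ := by
      rw [← Set.union_compl_self t]; exact measure_union_le t tᶜ
    rw [ht0, h1, add_zero, measure_univ] at this
    exact absurd this (by simp)
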